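/- arXiv:2504.20638 — 2 statements merged into one kernel-verified Lean document; each statement's English description precedes it below -/
import Mathlib

section
/- If P is a finite-dimensional Poisson algebra with solvable radical R (the largest solvable Poisson ideal), then R_A^2 = R·R (the associative square of R) is a nilpotent Poisson ideal, i.e., R_A^2 is contained in the nilradical of P. -/
/-!  Framework: dialgebras and Poisson algebras as bilinear structures on a module. -/

variable {F P : Type*} [Field F] [AddCommGroup P] [Module F P]

/-- A dialgebra: a vector space with two bilinear multiplications. -/
structure Dialgebra (F P : Type*) [Field F] [AddCommGroup P] [Module F P] where
  mul : P →ₗ[F] P →ₗ[F] P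
  bracket : P →ₗ[F] P →ₗ[F] P

namespace Dialgebra

variable (D : Dialgebra F P)

/-- Span of the set of products `a·b`, `a ∈ A`, `b ∈ B`. -/
def pmul (A B : Submodule F P) : Submodule F P :=
  Submodule.span F (Set.image2 (fun a b => D.mul a b) (A : Set P) (B : Set P))

/-- Span of the set of brackets `[a,b]`, `a ∈ A`, `b ∈ B`. -/
def pbra (A B : Submodule F P) : Submodule F P :=
  Submodule.span F (Set.image2 (fun a b => D.bracket a b) (A : Set P) (B : Set P))

/-- `A·B + [A,B]`. -/
def psq (A B : Submodule F P) : Submodule F P := D.pmul A B ⊔ D.pbra A B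

/-- A subalgebra: a subspace closed under both products. -/
def IsSubalgebra (A : Submodule F P) : Prop := D.psq A A ≤ A

/-- An ideal of the dialgebra. -/
def IsIdeal (A : Submodule F P) : Prop :=
  D.pmul A ⊤ ≤ A ∧ D.pmul ⊤ A ≤ A ∧ D.pbra A ⊤ ≤ A ∧ D.pbra ⊤ A ≤ A

/-- `A` is an ideal of the subalgebra `U`. -/
def IsIdealIn (A U : Submodule F P) : Prop :=
  A ≤ U ∧ D.pmul A U ≤ A ∧ D.pmul U A ≤ A ∧ D.pbra A U ≤ A ∧ D.pbra U A ≤ A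

/-- Lower central series of `B`: `B^1 = B`, `B^{n+1} = B^n·B + [B^n,B]`. -/
def lcs (B : Submodule F P) : ℕ → Submodule F P
  | 0 => B
  | n + 1 => D.psq (lcs B n) B

/-- `B` is nilpotent as a dialgebra. -/
def IsNilpotentSub (B : Submodule F P) : Prop := ∃ n, D.lcs B n = ⊥

/-- Derived series of `B`. -/
def ders (B : Submodule F P) : ℕ → Submodule F P
  | 0 => B
  | n + 1 => D.psq (ders B n) (ders B n)

/-- `B` is solvable as a dialgebra. -/
def IsSolvableSub (B : Submodule F P) : Prop := ∃ n, D.ders B n = ⊥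

/-- Associative powers: `apow B n = B_A^{n+1}`, i.e. `apow B 0 = B_A^1 = B`. -/
def apow (B : Submodule F P) : ℕ → Submodule F P
  | 0 => B
  | n + 1 => D.pmul (apow B n) B

/-- Lie powers: `lpow B n = B_L^{n+1}`. -/
def lpow (B : Submodule F P) : ℕ → Submodule F P
  | 0 => B
  | n + 1 => D.pbra (lpow B n) B

/-- Associative nilpotency of `B`. -/
def AssocNilpotent (B : Submodule F P) : Prop := ∃ n, D.apow B n = ⊥

/-- Lie nilpotency of `B`. -/
def LieNilpotent (B : Submodule F P) : Prop := ∃ n, D.lpow B n = ⊥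

/-- `mulPows B X n = X·B_A^n` (with the convention that it is `X` for `n = 0`). -/
def mulPows (B X : Submodule F P) : ℕ → Submodule F P
  | 0 => X
  | n + 1 => D.pmul (mulPows B X n) B

/-- `M` is a maximal (proper) subalgebra of the subalgebra `U`. -/
def IsMaximalSubalgebraIn (U M : Submodule F P) : Prop :=
  D.IsSubalgebra M ∧ M < U ∧ ∀ K, D.IsSubalgebra K → M ≤ K → K ≤ U → K = M ∨ K = U

/-- Frattini subalgebra of the subalgebra `U`: intersection of its maximal subalgebras. -/
def frattiniIn (U : Submodule F P) : Submodule F P :=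
  U ⊓ sInf {M | D.IsMaximalSubalgebraIn U M}

/-- Frattini ideal of the subalgebra `U`: largest ideal of `U` inside `frattiniIn U`. -/
def phiIn (U : Submodule F P) : Submodule F P :=
  sSup {I | D.IsIdealIn I U ∧ I ≤ D.frattiniIn U}

/-- Frattini subalgebra of the dialgebra. -/
def frattini : Submodule F P := D.frattiniIn ⊤

/-- Frattini ideal of the dialgebra. -/
def phi : Submodule F P := sSup {I | D.IsIdeal I ∧ I ≤ D.frattini}

/-- Minimal ideal. -/
def IsMinimalIdeal (A : Submodule F P) : Prop :=
  D.IsIdeal A ∧ A ≠ ⊥ ∧ ∀ I, D.IsIdeal I → I ≤ A → I = ⊥ ∨ I = A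

/-- Zero (trivial-multiplication) subspace. -/
def IsZeroAlg (A : Submodule F P) : Prop := D.pmul A A = ⊥ ∧ D.pbra A A = ⊥

/-- Zero socle: sum of the minimal zero ideals. -/
def zsoc : Submodule F P := sSup {A | D.IsMinimalIdeal A ∧ D.IsZeroAlg A}

/-- Socle: sum of the minimal ideals. -/
def soc : Submodule F P := sSup {A | D.IsMinimalIdeal A}

/-- Annihilator of `B` in the algebra. -/
def annih (B : Submodule F P) : Submodule F P where
  carrier := {x | ∀ b ∈ B, D.mul x b = 0 ∧ D.bracket x b = 0}
  add_mem' := by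
    intro x y hx hy b hb
    have h1 := hx b hb; have h2 := hy b hb
    constructor <;> simp [map_add, LinearMap.add_apply, h1.1, h1.2, h2.1, h2.2]
  zero_mem' := by intro b hb; simp
  smul_mem' := by
    intro c x hx b hb
    have h := hx b hb
    constructor <;> simp [map_smul, LinearMap.smul_apply, h.1, h.2]

/-- `R` is the solvable radical: the largest solvable ideal. -/
def IsRadical (R : Submodule F P) : Prop :=
  D.IsIdeal R ∧ D.IsSolvableSub R ∧ ∀ I, D.IsIdeal I → D.IsSolvableSub I → I ≤ R

/-- `N` is the nilradical: the largest nilpotent ideal. -/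
def IsNilradical (N : Submodule F P) : Prop :=
  D.IsIdeal N ∧ D.IsNilpotentSub N ∧ ∀ I, D.IsIdeal I → D.IsNilpotentSub I → I ≤ N

end Dialgebra

/-- A Poisson algebra: commutative associative product and Lie bracket linked by the Leibniz rule. -/
structure PoissonAlgebra (F P : Type*) [Field F] [AddCommGroup P] [Module F P]
    extends Dialgebra F P where
  mul_comm : ∀ x y, mul x y = mul y x
  mul_assoc : ∀ x y z, mul (mul x y) z = mul x (mul y z)
  lie_self : ∀ x, bracket x x = 0
  leibniz_lie : ∀ x y z, bracket x (bracket y z) = bracket (bracket x y) z + bracket y (bracket x z)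
  leibniz : ∀ x y z, bracket (mul x y) z = mul (bracket x z) y + mul x (bracket y z)

section AuxLemmas

namespace Dialgebra

variable (D : Dialgebra F P)

lemma mul_mem_pmul {A B : Submodule F P} {a b : P} (ha : a ∈ A) (hb : b ∈ B) :
    D.mul a b ∈ D.pmul A B :=
  Submodule.subset_span (Set.mem_image2_of_mem ha hb)

lemma bracket_mem_pbra {A B : Submodule F P} {a b : P} (ha : a ∈ A) (hb : b ∈ B) :
    D.bracket a b ∈ D.pbra A B :=
  Submodule.subset_span (Set.mem_image2_of_mem ha hb)

lemma pmul_le_iff {A B C : Submodule F P} :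
    D.pmul A B ≤ C ↔ ∀ a ∈ A, ∀ b ∈ B, D.mul a b ∈ C := by
  rw [pmul, Submodule.span_le, Set.image2_subset_iff]
  simp only [SetLike.mem_coe]

lemma pbra_le_iff {A B C : Submodule F P} :
    D.pbra A B ≤ C ↔ ∀ a ∈ A, ∀ b ∈ B, D.bracket a b ∈ C := by
  rw [pbra, Submodule.span_le, Set.image2_subset_iff]
  simp only [SetLike.mem_coe]

lemma pmul_mono {A A' B B' : Submodule F P} (hA : A ≤ A') (hB : B ≤ B') :
    D.pmul A B ≤ D.pmul A' B' :=
  Submodule.span_mono (Set.image2_subset hA hB)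

lemma pbra_mono {A A' B B' : Submodule F P} (hA : A ≤ A') (hB : B ≤ B') :
    D.pbra A B ≤ D.pbra A' B' :=
  Submodule.span_mono (Set.image2_subset hA hB)

lemma pmul_bot_left (B : Submodule F P) : D.pmul ⊥ B = ⊥ := by
  refine le_bot_iff.mp ((D.pmul_le_iff).mpr ?_)
  intro a ha b _
  rw [Submodule.mem_bot] at ha ⊢
  rw [ha]; simp

lemma apow_eq_bot_of (R : Submodule F P) {m : ℕ} (h : D.apow R m = ⊥) :
    ∀ k, D.apow R (m + k) = ⊥
  | 0 => h
  | (k + 1) => by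
    show D.pmul (D.apow R (m + k)) R = ⊥
    rw [apow_eq_bot_of R h k, D.pmul_bot_left]

end Dialgebra

namespace PoissonAlgebra

variable (Q : PoissonAlgebra F P)

lemma bracket_skew (a b : P) : Q.bracket a b = - Q.bracket b a := by
  have h := Q.lie_self (a + b)
  simp only [map_add, LinearMap.add_apply, Q.lie_self a, Q.lie_self b, zero_add, add_zero] at h
  exact eq_neg_of_add_eq_zero_right h

lemma pmul_comm (A B : Submodule F P) :
    Q.toDialgebra.pmul A B = Q.toDialgebra.pmul B A := by
  refine le_antisymm ?_ ?_ <;>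
    · rw [Dialgebra.pmul_le_iff]
      intro a ha b hb
      rw [Q.mul_comm]
      exact Q.toDialgebra.mul_mem_pmul hb ha

lemma pbra_comm (A B : Submodule F P) :
    Q.toDialgebra.pbra A B = Q.toDialgebra.pbra B A := by
  refine le_antisymm ?_ ?_ <;>
    · rw [Dialgebra.pbra_le_iff]
      intro a ha b hb
      rw [Q.bracket_skew]
      exact neg_mem (Q.toDialgebra.bracket_mem_pbra hb ha)

lemma pmul_assoc (A B C : Submodule F P) :
    Q.toDialgebra.pmul (Q.toDialgebra.pmul A B) C
      = Q.toDialgebra.pmul A (Q.toDialgebra.pmul B C) := by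
  apply le_antisymm
  · rw [Dialgebra.pmul_le_iff]
    intro x hx c hc
    have hle : Q.toDialgebra.pmul A B ≤ Submodule.comap (Q.mul.flip c)
        (Q.toDialgebra.pmul A (Q.toDialgebra.pmul B C)) := by
      rw [Dialgebra.pmul, Submodule.span_le]
      rintro _ ⟨a, ha, b, hb, rfl⟩
      simp only [SetLike.mem_coe, Submodule.mem_comap, LinearMap.flip_apply]
      rw [Q.mul_assoc]
      exact Q.toDialgebra.mul_mem_pmul ha (Q.toDialgebra.mul_mem_pmul hb hc)
    exact hle hx
  · rw [Dialgebra.pmul_le_iff]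
    intro a ha x hx
    have hle : Q.toDialgebra.pmul B C ≤ Submodule.comap (Q.mul a)
        (Q.toDialgebra.pmul (Q.toDialgebra.pmul A B) C) := by
      rw [Dialgebra.pmul, Submodule.span_le]
      rintro _ ⟨b, hb, c, hc, rfl⟩
      simp only [SetLike.mem_coe, Submodule.mem_comap]
      rw [← Q.mul_assoc]
      exact Q.toDialgebra.mul_mem_pmul (Q.toDialgebra.mul_mem_pmul ha hb) hc
    exact hle hx

lemma pbra_pmul_le (A B C : Submodule F P) :
    Q.toDialgebra.pbra (Q.toDialgebra.pmul A B) C ≤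
      Q.toDialgebra.pmul (Q.toDialgebra.pbra A C) B ⊔
        Q.toDialgebra.pmul A (Q.toDialgebra.pbra B C) := by
  rw [Dialgebra.pbra_le_iff]
  intro x hx c hc
  have hle : Q.toDialgebra.pmul A B ≤ Submodule.comap (Q.bracket.flip c)
      (Q.toDialgebra.pmul (Q.toDialgebra.pbra A C) B ⊔
        Q.toDialgebra.pmul A (Q.toDialgebra.pbra B C)) := by
    rw [Dialgebra.pmul, Submodule.span_le]
    rintro _ ⟨a, ha, b, hb, rfl⟩
    simp only [SetLike.mem_coe, Submodule.mem_comap, LinearMap.flip_apply]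
    rw [Q.leibniz]
    exact add_mem
      (Submodule.mem_sup_left
        (Q.toDialgebra.mul_mem_pmul (Q.toDialgebra.bracket_mem_pbra ha hc) hb))
      (Submodule.mem_sup_right
        (Q.toDialgebra.mul_mem_pmul ha (Q.toDialgebra.bracket_mem_pbra hb hc)))
  exact hle hx

lemma pbra_apow_le (R : Submodule F P) (hbra : Q.toDialgebra.pbra R R ≤ R) :
    ∀ k, Q.toDialgebra.pbra (Q.toDialgebra.apow R k) R ≤ Q.toDialgebra.apow R k
  | 0 => hbra
  | (k + 1) => by
    show Q.toDialgebra.pbra (Q.toDialgebra.pmul (Q.toDialgebra.apow R k) R) R ≤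
      Q.toDialgebra.pmul (Q.toDialgebra.apow R k) R
    refine le_trans (Q.pbra_pmul_le _ _ _) (sup_le ?_ ?_)
    · exact Q.toDialgebra.pmul_mono (pbra_apow_le R hbra k) le_rfl
    · exact Q.toDialgebra.pmul_mono le_rfl hbra

lemma apow_add (R : Submodule F P) (a : ℕ) :
    ∀ b, Q.toDialgebra.apow R (a + b + 1) =
      Q.toDialgebra.pmul (Q.toDialgebra.apow R a) (Q.toDialgebra.apow R b)
  | 0 => rfl
  | (b + 1) => by
    have h : a + (b + 1) + 1 = (a + b + 1) + 1 := by omega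
    rw [h]
    show Q.toDialgebra.pmul (Q.toDialgebra.apow R (a + b + 1)) R = _
    rw [apow_add R a b, Q.pmul_assoc]
    rfl

end PoissonAlgebra

end AuxLemmas

/-- If `R` is the solvable radical, then `R_A^2 = R·R` is a nilpotent Poisson ideal,
contained in the nilradical. -/
theorem radical_assoc_square_nilpotent {F P : Type*} [Field F] [AddCommGroup P] [Module F P]
    [FiniteDimensional F P] (Q : PoissonAlgebra F P) (R N : Submodule F P)
    (hR : Q.toDialgebra.IsRadical R) (hN : Q.toDialgebra.IsNilradical N) :
    Q.toDialgebra.IsIdeal (Q.toDialgebra.pmul R R) ∧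
    Q.toDialgebra.IsNilpotentSub (Q.toDialgebra.pmul R R) ∧
    Q.toDialgebra.pmul R R ≤ N := by
    classical
  obtain ⟨hRid, ⟨n, hders⟩, -⟩ := hR
  obtain ⟨hmul_top, htop_mul, hbra_top, htop_bra⟩ := hRid
  have hbraRR : Q.toDialgebra.pbra R R ≤ R :=
    le_trans (Q.toDialgebra.pbra_mono le_rfl le_top) hbra_top
  -- R·R is an ideal
  have hIdeal : Q.toDialgebra.IsIdeal (Q.toDialgebra.pmul R R) := by
    have h1 : Q.toDialgebra.pmul (Q.toDialgebra.pmul R R) ⊤ ≤ Q.toDialgebra.pmul R R := by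
      rw [Q.pmul_assoc]
      exact Q.toDialgebra.pmul_mono le_rfl hmul_top
    have h3 : Q.toDialgebra.pbra (Q.toDialgebra.pmul R R) ⊤ ≤ Q.toDialgebra.pmul R R := by
      refine le_trans (Q.pbra_pmul_le R R ⊤) (sup_le ?_ ?_)
      · exact Q.toDialgebra.pmul_mono hbra_top le_rfl
      · exact Q.toDialgebra.pmul_mono le_rfl hbra_top
    refine ⟨h1, ?_, h3, ?_⟩
    · rw [Q.pmul_comm]; exact h1
    · rw [Q.pbra_comm]; exact h3
  -- associative powers of R eventually vanish
  have hA : ∀ k, Q.toDialgebra.apow R (2 ^ k - 1) ≤ Q.toDialgebra.ders R k := by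
    intro k
    induction k with
    | zero => exact le_rfl
    | succ k ih =>
      have h2 : 2 ^ (k + 1) - 1 = (2 ^ k - 1) + (2 ^ k - 1) + 1 := by
        have := Nat.one_le_two_pow (n := k); omega
      rw [h2, Q.apow_add]
      exact le_trans (Q.toDialgebra.pmul_mono ih ih) le_sup_left
  set M : ℕ := 2 ^ n - 1 with hMdef
  have hM : Q.toDialgebra.apow R M = ⊥ := le_bot_iff.mp (le_trans (hA n) hders.le)
  have hMge : ∀ m, M ≤ m → Q.toDialgebra.apow R m = ⊥ := by
    intro m hm
    have := Q.toDialgebra.apow_eq_bot_of R hM (m - M)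
    rwa [Nat.add_sub_cancel' hm] at this
  -- the "tail" sums of associative powers
  set S : ℕ → Submodule F P := fun k => ⨆ m, Q.toDialgebra.apow R (k + m) with hSdef
  have hSmono : ∀ k, S (k + 1) ≤ S k := by
    intro k
    refine iSup_le fun m => ?_
    have h : k + 1 + m = k + (1 + m) := by omega
    rw [h]
    exact le_iSup (fun m => Q.toDialgebra.apow R (k + m)) (1 + m)
  have hSmul : ∀ k, Q.toDialgebra.pmul (S k) R ≤ S (k + 1) := by
    intro k
    rw [Dialgebra.pmul_le_iff]
    intro a ha b hb
    have hle : S k ≤ Submodule.comap (Q.mul.flip b) (S (k + 1)) := by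
      refine iSup_le fun m => fun x hx => ?_
      simp only [Submodule.mem_comap, LinearMap.flip_apply]
      have h1 : Q.mul x b ∈ Q.toDialgebra.apow R (k + m + 1) :=
        Q.toDialgebra.mul_mem_pmul hx hb
      have h2 : k + m + 1 = k + 1 + m := by omega
      rw [h2] at h1
      exact le_iSup (fun m => Q.toDialgebra.apow R (k + 1 + m)) m h1
    exact hle ha
  have hSbra : ∀ k, Q.toDialgebra.pbra (S k) R ≤ S k := by
    intro k
    rw [Dialgebra.pbra_le_iff]
    intro a ha b hb
    have hle : S k ≤ Submodule.comap (Q.bracket.flip b) (S k) := by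
      refine iSup_le fun m => fun x hx => ?_
      simp only [Submodule.mem_comap, LinearMap.flip_apply]
      have h1 : Q.bracket x b ∈ Q.toDialgebra.apow R (k + m) :=
        Q.pbra_apow_le R hbraRR (k + m) (Q.toDialgebra.bracket_mem_pbra hx hb)
      exact le_iSup (fun m => Q.toDialgebra.apow R (k + m)) m h1
    exact hle ha
  -- lower central series bound
  have hlcs : ∀ j, Q.toDialgebra.lcs (Q.toDialgebra.pmul R R) j ≤ S (j + 1) := by
    intro j
    induction j with
    | zero =>
      have : Q.toDialgebra.lcs (Q.toDialgebra.pmul R R) 0 = Q.toDialgebra.apow R (1 + 0) := rfl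
      rw [this]
      exact le_iSup (fun m => Q.toDialgebra.apow R (1 + m)) 0
    | succ j ih =>
      show Q.toDialgebra.pmul (Q.toDialgebra.lcs (Q.toDialgebra.pmul R R) j)
            (Q.toDialgebra.pmul R R) ⊔
          Q.toDialgebra.pbra (Q.toDialgebra.lcs (Q.toDialgebra.pmul R R) j)
            (Q.toDialgebra.pmul R R) ≤ S (j + 1 + 1)
      refine sup_le ?_ ?_
      · calc Q.toDialgebra.pmul (Q.toDialgebra.lcs (Q.toDialgebra.pmul R R) j)
              (Q.toDialgebra.pmul R R)
            ≤ Q.toDialgebra.pmul (S (j + 1)) (Q.toDialgebra.pmul R R) :=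
              Q.toDialgebra.pmul_mono ih le_rfl
          _ = Q.toDialgebra.pmul (Q.toDialgebra.pmul (S (j + 1)) R) R := (Q.pmul_assoc _ _ _).symm
          _ ≤ Q.toDialgebra.pmul (S (j + 2)) R := Q.toDialgebra.pmul_mono (hSmul (j + 1)) le_rfl
          _ ≤ S (j + 3) := hSmul (j + 2)
          _ ≤ S (j + 2) := hSmono (j + 2)
      · have hb1 : Q.toDialgebra.pbra R (S (j + 1)) ≤ S (j + 1) := by
          rw [Q.pbra_comm]; exact hSbra (j + 1)
        calc Q.toDialgebra.pbra (Q.toDialgebra.lcs (Q.toDialgebra.pmul R R) j)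
              (Q.toDialgebra.pmul R R)
            ≤ Q.toDialgebra.pbra (S (j + 1)) (Q.toDialgebra.pmul R R) :=
              Q.toDialgebra.pbra_mono ih le_rfl
          _ = Q.toDialgebra.pbra (Q.toDialgebra.pmul R R) (S (j + 1)) := Q.pbra_comm _ _
          _ ≤ Q.toDialgebra.pmul (Q.toDialgebra.pbra R (S (j + 1))) R ⊔
                Q.toDialgebra.pmul R (Q.toDialgebra.pbra R (S (j + 1))) := Q.pbra_pmul_le _ _ _
          _ ≤ Q.toDialgebra.pmul (S (j + 1)) R ⊔ Q.toDialgebra.pmul R (S (j + 1)) :=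
              sup_le (le_trans (Q.toDialgebra.pmul_mono hb1 le_rfl) le_sup_left)
                (le_trans (Q.toDialgebra.pmul_mono le_rfl hb1) le_sup_right)
          _ = Q.toDialgebra.pmul (S (j + 1)) R := by rw [Q.pmul_comm R (S (j + 1)), sup_idem]
          _ ≤ S (j + 2) := hSmul (j + 1)
  have hNil : Q.toDialgebra.IsNilpotentSub (Q.toDialgebra.pmul R R) := by
    refine ⟨M, le_bot_iff.mp (le_trans (hlcs M) ?_)⟩
    refine iSup_le fun m => ?_
    exact (hMge (M + 1 + m) (by omega)).le
  exact ⟨hIdeal, hNil, hN.2.2 _ hIdeal hNil⟩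
end

section
/- Let A be a finite-dimensional dialgebra that is the direct sum of ideals A = A_1 ⊕ ... ⊕ A_n. Then the Frattini ideal satisfies φ(A) = φ(A_1) ⊕ ... ⊕ φ(A_n). -/
/-!  Framework: dialgebras and Poisson algebras as bilinear structures on a module. -/

variable {F P : Type*} [Field F] [AddCommGroup P] [Module F P]

section Aux

namespace Dialgebra

variable {F P : Type*} [Field F] [AddCommGroup P] [Module F P] (D : Dialgebra F P)

theorem pmul_le {X Y Z : Submodule F P} (h : ∀ x ∈ X, ∀ y ∈ Y, D.mul x y ∈ Z) :
    D.pmul X Y ≤ Z :=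
  Submodule.span_le.2 (Set.image2_subset_iff.2 h)

theorem pbra_le {X Y Z : Submodule F P} (h : ∀ x ∈ X, ∀ y ∈ Y, D.bracket x y ∈ Z) :
    D.pbra X Y ≤ Z :=
  Submodule.span_le.2 (Set.image2_subset_iff.2 h)

theorem mul_mem_pmul_s12 {X Y : Submodule F P} {x y : P} (hx : x ∈ X) (hy : y ∈ Y) :
    D.mul x y ∈ D.pmul X Y :=
  Submodule.subset_span (Set.mem_image2_of_mem hx hy)

theorem bracket_mem_pbra_s12 {X Y : Submodule F P} {x y : P} (hx : x ∈ X) (hy : y ∈ Y) :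
    D.bracket x y ∈ D.pbra X Y :=
  Submodule.subset_span (Set.mem_image2_of_mem hx hy)

theorem pmul_mono_s12 {X X' Y Y' : Submodule F P} (hX : X ≤ X') (hY : Y ≤ Y') :
    D.pmul X Y ≤ D.pmul X' Y' :=
  D.pmul_le fun x hx y hy => D.mul_mem_pmul_s12 (hX hx) (hY hy)

theorem pbra_mono_s12 {X X' Y Y' : Submodule F P} (hX : X ≤ X') (hY : Y ≤ Y') :
    D.pbra X Y ≤ D.pbra X' Y' :=
  D.pbra_le fun x hx y hy => D.bracket_mem_pbra_s12 (hX hx) (hY hy)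

theorem psq_mono {X X' Y Y' : Submodule F P} (hX : X ≤ X') (hY : Y ≤ Y') :
    D.psq X Y ≤ D.psq X' Y' :=
  sup_le_sup (D.pmul_mono_s12 hX hY) (D.pbra_mono_s12 hX hY)

theorem pmul_iSup_le {ι : Sort*} {B : ι → Submodule F P} {Y W : Submodule F P}
    (h : ∀ i, D.pmul (B i) Y ≤ W) : D.pmul (⨆ i, B i) Y ≤ W := by
  refine D.pmul_le fun x hx y hy => ?_
  refine Submodule.iSup_induction (motive := fun x => D.mul x y ∈ W) B hx
    (fun i x hxi => h i (D.mul_mem_pmul_s12 hxi hy)) (by simp) (fun a b ha hb => ?_)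
  simpa [map_add] using add_mem ha hb

theorem pbra_iSup_le {ι : Sort*} {B : ι → Submodule F P} {Y W : Submodule F P}
    (h : ∀ i, D.pbra (B i) Y ≤ W) : D.pbra (⨆ i, B i) Y ≤ W := by
  refine D.pbra_le fun x hx y hy => ?_
  refine Submodule.iSup_induction (motive := fun x => D.bracket x y ∈ W) B hx
    (fun i x hxi => h i (D.bracket_mem_pbra_s12 hxi hy)) (by simp) (fun a b ha hb => ?_)
  simpa [map_add] using add_mem ha hb

theorem pmul_iSup_le_right {ι : Sort*} {B : ι → Submodule F P} {X W : Submodule F P}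
    (h : ∀ i, D.pmul X (B i) ≤ W) : D.pmul X (⨆ i, B i) ≤ W := by
  refine D.pmul_le fun x hx y hy => ?_
  refine Submodule.iSup_induction (motive := fun y => D.mul x y ∈ W) B hy
    (fun i y hyi => h i (D.mul_mem_pmul_s12 hx hyi)) (by simp) (fun a b ha hb => ?_)
  simpa [map_add] using add_mem ha hb

theorem pbra_iSup_le_right {ι : Sort*} {B : ι → Submodule F P} {X W : Submodule F P}
    (h : ∀ i, D.pbra X (B i) ≤ W) : D.pbra X (⨆ i, B i) ≤ W := by
  refine D.pbra_le fun x hx y hy => ?_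
  refine Submodule.iSup_induction (motive := fun y => D.bracket x y ∈ W) B hy
    (fun i y hyi => h i (D.bracket_mem_pbra_s12 hx hyi)) (by simp) (fun a b ha hb => ?_)
  simpa [map_add] using add_mem ha hb

theorem pmul_sup_left {X Y Z : Submodule F P} :
    D.pmul (X ⊔ Y) Z ≤ D.pmul X Z ⊔ D.pmul Y Z := by
  refine D.pmul_le fun x hx z hz => ?_
  obtain ⟨a, ha, b, hb, rfl⟩ := Submodule.mem_sup.mp hx
  rw [map_add, LinearMap.add_apply]
  exact add_mem (Submodule.mem_sup_left (D.mul_mem_pmul_s12 ha hz))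
    (Submodule.mem_sup_right (D.mul_mem_pmul_s12 hb hz))

theorem pbra_sup_left {X Y Z : Submodule F P} :
    D.pbra (X ⊔ Y) Z ≤ D.pbra X Z ⊔ D.pbra Y Z := by
  refine D.pbra_le fun x hx z hz => ?_
  obtain ⟨a, ha, b, hb, rfl⟩ := Submodule.mem_sup.mp hx
  rw [map_add, LinearMap.add_apply]
  exact add_mem (Submodule.mem_sup_left (D.bracket_mem_pbra_s12 ha hz))
    (Submodule.mem_sup_right (D.bracket_mem_pbra_s12 hb hz))

theorem pmul_sup_right {X Y Z : Submodule F P} :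
    D.pmul X (Y ⊔ Z) ≤ D.pmul X Y ⊔ D.pmul X Z := by
  refine D.pmul_le fun x hx z hz => ?_
  obtain ⟨a, ha, b, hb, rfl⟩ := Submodule.mem_sup.mp hz
  rw [map_add]
  exact add_mem (Submodule.mem_sup_left (D.mul_mem_pmul_s12 hx ha))
    (Submodule.mem_sup_right (D.mul_mem_pmul_s12 hx hb))

theorem pbra_sup_right {X Y Z : Submodule F P} :
    D.pbra X (Y ⊔ Z) ≤ D.pbra X Y ⊔ D.pbra X Z := by
  refine D.pbra_le fun x hx z hz => ?_
  obtain ⟨a, ha, b, hb, rfl⟩ := Submodule.mem_sup.mp hz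
  rw [map_add]
  exact add_mem (Submodule.mem_sup_left (D.bracket_mem_pbra_s12 hx ha))
    (Submodule.mem_sup_right (D.bracket_mem_pbra_s12 hx hb))

/-- An ideal is a subalgebra. -/
theorem isSubalgebra_of_isIdeal {I : Submodule F P} (h : D.IsIdeal I) : D.IsSubalgebra I :=
  sup_le ((D.pmul_mono_s12 le_rfl le_top).trans h.1) ((D.pbra_mono_s12 le_rfl le_top).trans h.2.2.1)

theorem isSubalgebra_inf {X Y : Submodule F P} (hX : D.IsSubalgebra X) (hY : D.IsSubalgebra Y) :
    D.IsSubalgebra (X ⊓ Y) :=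
  le_inf ((D.psq_mono inf_le_left inf_le_left).trans hX)
    ((D.psq_mono inf_le_right inf_le_right).trans hY)

/-- A sup of ideals-in-`U` is an ideal in `U`. -/
theorem isIdealIn_sSup {U : Submodule F P} {S : Set (Submodule F P)}
    (h : ∀ I ∈ S, D.IsIdealIn I U) : D.IsIdealIn (sSup S) U := by
  rw [sSup_eq_iSup']
  refine ⟨iSup_le fun I => (h I I.2).1, ?_, ?_, ?_, ?_⟩
  · exact D.pmul_iSup_le fun I => (h I I.2).2.1.trans (le_iSup (fun I : S => (I : Submodule F P)) I)
  · exact D.pmul_iSup_le_right fun I => (h I I.2).2.2.1.trans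
      (le_iSup (fun I : S => (I : Submodule F P)) I)
  · exact D.pbra_iSup_le fun I => (h I I.2).2.2.2.1.trans
      (le_iSup (fun I : S => (I : Submodule F P)) I)
  · exact D.pbra_iSup_le_right fun I => (h I I.2).2.2.2.2.trans
      (le_iSup (fun I : S => (I : Submodule F P)) I)

theorem isIdealIn_phiIn (U : Submodule F P) : D.IsIdealIn (D.phiIn U) U :=
  D.isIdealIn_sSup fun _ hI => hI.1

theorem phiIn_le_frattiniIn (U : Submodule F P) : D.phiIn U ≤ D.frattiniIn U :=
  sSup_le fun _ hI => hI.2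

/-- In a finite-dimensional algebra, any proper subalgebra of `U` is contained in a
maximal subalgebra of `U`. -/
theorem exists_maximal_between [FiniteDimensional F P] {S U : Submodule F P}
    (hS : D.IsSubalgebra S) (hSU : S < U) :
    ∃ M, D.IsMaximalSubalgebraIn U M ∧ S ≤ M := by
  obtain ⟨M, hM, hmin⟩ := (inferInstance : WellFoundedGT (Submodule F P)).wf.has_min
    {K | D.IsSubalgebra K ∧ S ≤ K ∧ K < U} ⟨S, hS, le_rfl, hSU⟩
  refine ⟨M, ⟨hM.1, hM.2.2, fun K hK hMK hKU => ?_⟩, hM.2.1⟩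
  by_cases hKU' : K = U
  · exact Or.inr hKU'
  · left
    by_contra hKM
    exact hmin K ⟨hK, hM.2.1.trans hMK, lt_of_le_of_ne hKU hKU'⟩
      (lt_of_le_of_ne hMK (Ne.symm hKM))

end Dialgebra

end Aux

/-- The Frattini ideal of a direct sum of ideals is the (direct) sum of the Frattini
ideals of the summands. -/
theorem phi_direct_sum {F P : Type*} [Field F] [AddCommGroup P] [Module F P]
    [FiniteDimensional F P] (D : Dialgebra F P) (n : ℕ) (A : Fin n → Submodule F P)
    (hI : ∀ i, D.IsIdeal (A i)) (hInd : iSupIndep A)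
    (hSup : ⨆ i, A i = ⊤) :
    D.phi = ⨆ i, D.phiIn (A i) := by
  classical
  -- the complement of the `i`-th summand
  set C : Fin n → Submodule F P := fun i => ⨆ (j) (_ : j ≠ i), A j with hCdef
  have hAC : ∀ j i, j ≠ i → A j ≤ C i := fun j i h =>
    le_iSup_of_le j (le_iSup_of_le h le_rfl)
  have hdisj : ∀ i, A i ⊓ C i = ⊥ := fun i => (hInd i).eq_bot
  have hdisj' : ∀ i, C i ⊓ A i = ⊥ := fun i => by rw [inf_comm]; exact hdisj i
  have hsupC : ∀ i, A i ⊔ C i = ⊤ := by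
    intro i
    rw [eq_top_iff, ← hSup]
    refine iSup_le fun j => ?_
    by_cases h : j = i
    · subst h; exact le_sup_left
    · exact (hAC j i h).trans le_sup_right
  -- products between distinct summands vanish
  have hmulAA : ∀ i j, j ≠ i → D.pmul (A j) (A i) = ⊥ ∧ D.pbra (A j) (A i) = ⊥ := by
    intro i j hne
    have hbot : A j ⊓ A i = ⊥ := (iSupIndep.pairwiseDisjoint hInd hne).eq_bot
    constructor
    · refine le_bot_iff.mp (D.pmul_le fun x hx y hy => ?_)
      rw [← hbot]
      exact Submodule.mem_inf.mpr ⟨(hI j).1 (D.mul_mem_pmul_s12 hx Submodule.mem_top),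
        (hI i).2.1 (D.mul_mem_pmul_s12 Submodule.mem_top hy)⟩
    · refine le_bot_iff.mp (D.pbra_le fun x hx y hy => ?_)
      rw [← hbot]
      exact Submodule.mem_inf.mpr ⟨(hI j).2.2.1 (D.bracket_mem_pbra_s12 hx Submodule.mem_top),
        (hI i).2.2.2 (D.bracket_mem_pbra_s12 Submodule.mem_top hy)⟩
  -- products of `C i` with anything inside `A i` vanish
  have hCzero : ∀ i (X : Submodule F P), X ≤ A i →
      D.pmul (C i) X ≤ ⊥ ∧ D.pmul X (C i) ≤ ⊥ ∧ D.pbra (C i) X ≤ ⊥ ∧ D.pbra X (C i) ≤ ⊥ := by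
    intro i X hX
    refine ⟨D.pmul_iSup_le fun j => D.pmul_iSup_le fun hne =>
        (D.pmul_mono_s12 le_rfl hX).trans (hmulAA i j hne).1.le,
      D.pmul_iSup_le_right fun j => D.pmul_iSup_le_right fun hne =>
        (D.pmul_mono_s12 hX le_rfl).trans (hmulAA j i (Ne.symm hne)).1.le,
      D.pbra_iSup_le fun j => D.pbra_iSup_le fun hne =>
        (D.pbra_mono_s12 le_rfl hX).trans (hmulAA i j hne).2.le,
      D.pbra_iSup_le_right fun j => D.pbra_iSup_le_right fun hne =>
        (D.pbra_mono_s12 hX le_rfl).trans (hmulAA j i (Ne.symm hne)).2.le⟩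
  -- `C i` is an ideal
  have hCideal : ∀ i, D.IsIdeal (C i) := by
    intro i
    exact ⟨D.pmul_iSup_le fun j => D.pmul_iSup_le fun hne => (hI j).1.trans (hAC j i hne),
      D.pmul_iSup_le_right fun j => D.pmul_iSup_le_right fun hne => (hI j).2.1.trans (hAC j i hne),
      D.pbra_iSup_le fun j => D.pbra_iSup_le fun hne => (hI j).2.2.1.trans (hAC j i hne),
      D.pbra_iSup_le_right fun j => D.pbra_iSup_le_right fun hne =>
        (hI j).2.2.2.trans (hAC j i hne)⟩
  -- maximal subalgebras of the summands extend to maximal subalgebras of the whole algebra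
  have hmaxext : ∀ i M, D.IsMaximalSubalgebraIn (A i) M →
      D.IsMaximalSubalgebraIn ⊤ (M ⊔ C i) := by
    intro i M hM
    have hMA : M ≤ A i := hM.2.1.le
    have hz := hCzero i M hMA
    have hsub : D.IsSubalgebra (M ⊔ C i) := by
      refine sup_le ?_ ?_
      · refine D.pmul_sup_left.trans (sup_le (D.pmul_sup_right.trans (sup_le ?_ ?_))
          (D.pmul_sup_right.trans (sup_le ?_ ?_)))
        · exact (le_sup_left.trans hM.1).trans le_sup_left
        · exact hz.2.1.trans bot_le
        · exact hz.1.trans bot_le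
        · exact ((D.pmul_mono_s12 le_rfl le_top).trans (hCideal i).1).trans le_sup_right
      · refine D.pbra_sup_left.trans (sup_le (D.pbra_sup_right.trans (sup_le ?_ ?_))
          (D.pbra_sup_right.trans (sup_le ?_ ?_)))
        · exact (le_sup_right.trans hM.1).trans le_sup_left
        · exact hz.2.2.2.trans bot_le
        · exact hz.2.2.1.trans bot_le
        · exact ((D.pbra_mono_s12 le_rfl le_top).trans (hCideal i).2.2.1).trans le_sup_right
    have hne_top : M ⊔ C i ≠ ⊤ := by
      intro h
      have h2 : (M ⊔ C i) ⊓ A i = M ⊔ C i ⊓ A i := sup_inf_assoc_of_le _ hMA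
      rw [h, top_inf_eq, hdisj' i, sup_bot_eq] at h2
      exact hM.2.1.ne' h2
    refine ⟨hsub, lt_of_le_of_ne le_top hne_top, fun K hK hMCK _ => ?_⟩
    have hCK : C i ≤ K := le_sup_right.trans hMCK
    have hKeq : K = C i ⊔ A i ⊓ K := by
      have h2 : (C i ⊔ A i) ⊓ K = C i ⊔ A i ⊓ K := sup_inf_assoc_of_le _ hCK
      rw [sup_comm (C i) (A i), hsupC i, top_inf_eq] at h2
      exact h2
    have hsubK : D.IsSubalgebra (A i ⊓ K) :=
      D.isSubalgebra_inf (D.isSubalgebra_of_isIdeal (hI i)) hK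
    have hMK : M ≤ A i ⊓ K := le_inf hMA (le_sup_left.trans hMCK)
    rcases hM.2.2 (A i ⊓ K) hsubK hMK inf_le_left with h | h
    · left; rw [hKeq, h]; exact sup_comm _ _
    · right; rw [hKeq, h, sup_comm]; exact hsupC i
  -- direction ⊇ : each φ(A i) is contained in φ(A)
  have hge : ∀ i, D.phiIn (A i) ≤ D.phi := by
    intro i
    have hII : D.IsIdealIn (D.phiIn (A i)) (A i) := D.isIdealIn_phiIn (A i)
    have hIA : D.phiIn (A i) ≤ A i := hII.1
    have hz := hCzero i (D.phiIn (A i)) hIA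
    have hIideal : D.IsIdeal (D.phiIn (A i)) := by
      refine ⟨?_, ?_, ?_, ?_⟩
      · calc D.pmul (D.phiIn (A i)) ⊤ = D.pmul (D.phiIn (A i)) (A i ⊔ C i) := by rw [hsupC i]
          _ ≤ D.pmul (D.phiIn (A i)) (A i) ⊔ D.pmul (D.phiIn (A i)) (C i) := D.pmul_sup_right
          _ ≤ D.phiIn (A i) := sup_le hII.2.1 (hz.2.1.trans bot_le)
      · calc D.pmul ⊤ (D.phiIn (A i)) = D.pmul (A i ⊔ C i) (D.phiIn (A i)) := by rw [hsupC i]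
          _ ≤ D.pmul (A i) (D.phiIn (A i)) ⊔ D.pmul (C i) (D.phiIn (A i)) := D.pmul_sup_left
          _ ≤ D.phiIn (A i) := sup_le hII.2.2.1 (hz.1.trans bot_le)
      · calc D.pbra (D.phiIn (A i)) ⊤ = D.pbra (D.phiIn (A i)) (A i ⊔ C i) := by rw [hsupC i]
          _ ≤ D.pbra (D.phiIn (A i)) (A i) ⊔ D.pbra (D.phiIn (A i)) (C i) := D.pbra_sup_right
          _ ≤ D.phiIn (A i) := sup_le hII.2.2.2.1 (hz.2.2.2.trans bot_le)
      · calc D.pbra ⊤ (D.phiIn (A i)) = D.pbra (A i ⊔ C i) (D.phiIn (A i)) := by rw [hsupC i]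
          _ ≤ D.pbra (A i) (D.phiIn (A i)) ⊔ D.pbra (C i) (D.phiIn (A i)) := D.pbra_sup_left
          _ ≤ D.phiIn (A i) := sup_le hII.2.2.2.2 (hz.2.2.1.trans bot_le)
    have hIfr : D.phiIn (A i) ≤ D.frattini := by
      refine le_inf le_top (le_sInf fun M hM => ?_)
      by_contra hnot
      have hMsub : D.IsSubalgebra (M ⊔ D.phiIn (A i)) := by
        refine sup_le ?_ ?_
        · refine D.pmul_sup_left.trans (sup_le (D.pmul_sup_right.trans (sup_le ?_ ?_))
            (D.pmul_sup_right.trans (sup_le ?_ ?_)))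
          · exact (le_sup_left.trans hM.1).trans le_sup_left
          · exact ((D.pmul_mono_s12 le_top le_rfl).trans hIideal.2.1).trans le_sup_right
          · exact ((D.pmul_mono_s12 le_rfl le_top).trans hIideal.1).trans le_sup_right
          · exact ((D.pmul_mono_s12 le_rfl le_top).trans hIideal.1).trans le_sup_right
        · refine D.pbra_sup_left.trans (sup_le (D.pbra_sup_right.trans (sup_le ?_ ?_))
            (D.pbra_sup_right.trans (sup_le ?_ ?_)))
          · exact (le_sup_right.trans hM.1).trans le_sup_left
          · exact ((D.pbra_mono_s12 le_top le_rfl).trans hIideal.2.2.2).trans le_sup_right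
          · exact ((D.pbra_mono_s12 le_rfl le_top).trans hIideal.2.2.1).trans le_sup_right
          · exact ((D.pbra_mono_s12 le_rfl le_top).trans hIideal.2.2.1).trans le_sup_right
      have htop : M ⊔ D.phiIn (A i) = ⊤ := by
        rcases hM.2.2 (M ⊔ D.phiIn (A i)) hMsub le_sup_left le_top with h | h
        · exact absurd (le_sup_right.trans h.le) hnot
        · exact h
      have hAi : A i = D.phiIn (A i) ⊔ M ⊓ A i := by
        have h2 : (D.phiIn (A i) ⊔ M) ⊓ A i = D.phiIn (A i) ⊔ M ⊓ A i :=
          sup_inf_assoc_of_le _ hIA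
        rw [sup_comm (D.phiIn (A i)) M, htop, top_inf_eq] at h2
        exact h2
      have hSsub : D.IsSubalgebra (M ⊓ A i) :=
        D.isSubalgebra_inf hM.1 (D.isSubalgebra_of_isIdeal (hI i))
      by_cases hS : M ⊓ A i = A i
      · exact hnot (hIA.trans (by rw [← hS]; exact inf_le_left))
      · obtain ⟨Mi, hMi, hSMi⟩ :=
          D.exists_maximal_between hSsub (lt_of_le_of_ne inf_le_right hS)
        have hAiMi : A i ≤ Mi := by
          rw [hAi]
          exact sup_le ((D.phiIn_le_frattiniIn (A i)).trans
            (inf_le_right.trans (sInf_le hMi))) hSMi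
        exact hMi.2.1.not_ge hAiMi
    have hmem : D.phiIn (A i) ∈ {J : Submodule F P | D.IsIdeal J ∧ J ≤ D.frattini} :=
      ⟨hIideal, hIfr⟩
    exact le_sSup hmem
  -- direction ⊆
  have hle : D.phi ≤ ⨆ i, D.phiIn (A i) := by
    refine sSup_le fun I hI' => ?_
    obtain ⟨hIideal, hIfr⟩ := hI'
    intro x hx
    have hx' : x ∈ ⨆ i, A i := by rw [hSup]; exact Submodule.mem_top
    obtain ⟨f, hf, hsum⟩ := (Submodule.mem_iSup_iff_exists_finsupp A x).mp hx'
    rw [Finsupp.sum] at hsum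
    rw [← hsum]
    refine Submodule.sum_mem _ fun i _ => ?_
    refine Submodule.mem_iSup_of_mem i ?_
    -- show `f i ∈ φ(A i)` via the ideal `K = A i ⊓ (I ⊔ C i)`
    have hz := hCzero i (A i) le_rfl
    have hKideal : D.IsIdealIn (A i ⊓ (I ⊔ C i)) (A i) := by
      refine ⟨inf_le_left, le_inf ?_ ?_, le_inf ?_ ?_, le_inf ?_ ?_, le_inf ?_ ?_⟩
      · exact (D.pmul_mono_s12 inf_le_left le_rfl).trans ((D.pmul_mono_s12 le_rfl le_top).trans (hI i).1)
      · calc D.pmul (A i ⊓ (I ⊔ C i)) (A i) ≤ D.pmul (I ⊔ C i) (A i) :=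
              D.pmul_mono_s12 inf_le_right le_rfl
          _ ≤ D.pmul I (A i) ⊔ D.pmul (C i) (A i) := D.pmul_sup_left
          _ ≤ I ⊔ C i := sup_le (((D.pmul_mono_s12 le_rfl le_top).trans hIideal.1).trans le_sup_left)
              (hz.1.trans bot_le)
      · exact (D.pmul_mono_s12 le_rfl inf_le_left).trans ((D.pmul_mono_s12 le_rfl le_top).trans (hI i).1)
      · calc D.pmul (A i) (A i ⊓ (I ⊔ C i)) ≤ D.pmul (A i) (I ⊔ C i) :=
              D.pmul_mono_s12 le_rfl inf_le_right
          _ ≤ D.pmul (A i) I ⊔ D.pmul (A i) (C i) := D.pmul_sup_right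
          _ ≤ I ⊔ C i := sup_le (((D.pmul_mono_s12 le_top le_rfl).trans hIideal.2.1).trans le_sup_left)
              (hz.2.1.trans bot_le)
      · exact (D.pbra_mono_s12 inf_le_left le_rfl).trans
          ((D.pbra_mono_s12 le_rfl le_top).trans (hI i).2.2.1)
      · calc D.pbra (A i ⊓ (I ⊔ C i)) (A i) ≤ D.pbra (I ⊔ C i) (A i) :=
              D.pbra_mono_s12 inf_le_right le_rfl
          _ ≤ D.pbra I (A i) ⊔ D.pbra (C i) (A i) := D.pbra_sup_left
          _ ≤ I ⊔ C i := sup_le (((D.pbra_mono_s12 le_rfl le_top).trans hIideal.2.2.1).trans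
              le_sup_left) (hz.2.2.1.trans bot_le)
      · exact (D.pbra_mono_s12 le_rfl inf_le_left).trans
          ((D.pbra_mono_s12 le_rfl le_top).trans (hI i).2.2.1)
      · calc D.pbra (A i) (A i ⊓ (I ⊔ C i)) ≤ D.pbra (A i) (I ⊔ C i) :=
              D.pbra_mono_s12 le_rfl inf_le_right
          _ ≤ D.pbra (A i) I ⊔ D.pbra (A i) (C i) := D.pbra_sup_right
          _ ≤ I ⊔ C i := sup_le (((D.pbra_mono_s12 le_top le_rfl).trans hIideal.2.2.2).trans
              le_sup_left) (hz.2.2.2.trans bot_le)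
    have hKfr : A i ⊓ (I ⊔ C i) ≤ D.frattiniIn (A i) := by
      refine le_inf inf_le_left (le_sInf fun M hM => ?_)
      have hIM : I ≤ M ⊔ C i :=
        hIfr.trans (inf_le_right.trans (sInf_le (hmaxext i M hM)))
      calc A i ⊓ (I ⊔ C i) ≤ A i ⊓ (M ⊔ C i) :=
            inf_le_inf_left _ (sup_le hIM le_sup_right)
        _ = (M ⊔ C i) ⊓ A i := inf_comm _ _
        _ = M ⊔ C i ⊓ A i := sup_inf_assoc_of_le _ hM.2.1.le
        _ = M := by rw [hdisj' i, sup_bot_eq]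
    have hfiK : f i ∈ A i ⊓ (I ⊔ C i) := by
      refine Submodule.mem_inf.mpr ⟨hf i, ?_⟩
      by_cases hi : i ∈ f.support
      · have heq : f i = x - ∑ j ∈ f.support.erase i, f j := by
          rw [← hsum, ← Finset.add_sum_erase _ f hi]
          abel
        rw [heq]
        refine sub_mem (Submodule.mem_sup_left hx) (Submodule.sum_mem _ fun j hj => ?_)
        exact Submodule.mem_sup_right (hAC j i (Finset.ne_of_mem_erase hj) (hf j))
      · rw [Finsupp.notMem_support_iff.mp hi]; exact zero_mem _
    have hmem : (A i ⊓ (I ⊔ C i)) ∈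
        {J : Submodule F P | D.IsIdealIn J (A i) ∧ J ≤ D.frattiniIn (A i)} := ⟨hKideal, hKfr⟩
    exact le_sSup hmem hfiK
  exact le_antisymm hle (iSup_le hge)
end
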